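/- Let u, v, w, z : ℝ² → ℝ be measurable. Then, with all integrals taken in the Lebesgue sense with values in [0, ∞], ∫_{ℝ²}∫_{ℝ²} ln(1 + |x − y|) |u(x)v(x)| |w(y)z(y)| dx dy ≤ ‖u‖_* ‖v‖_* ‖w‖₂ ‖z‖₂ + ‖u‖₂ ‖v‖₂ ‖w‖_* ‖z‖_*, where ‖u‖₂ = (∫_{ℝ²} u(x)² dx)^{1/2} and ‖u‖_* = (∫_{ℝ²} ln(1 + |x|) u(x)² dx)^{1/2}. -/

import Mathlib

open MeasureTheory Real ENNReal

lemma cs_aux {α : Type*} [MeasurableSpace α] (μ : Measure α) {f g : α → ℝ≥0∞}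
    (hf : AEMeasurable f μ) (hg : AEMeasurable g μ) :
    ∫⁻ a, f a * g a ∂μ ≤ (∫⁻ a, f a ^ (2:ℝ) ∂μ) ^ (1/2:ℝ) * (∫⁻ a, g a ^ (2:ℝ) ∂μ) ^ (1/2:ℝ) :=
  ENNReal.lintegral_mul_le_Lp_mul_Lq μ Real.HolderConjugate.two_two hf hg

lemma log_sub_le (x y : EuclideanSpace ℝ (Fin 2)) :
    Real.log (1 + ‖x - y‖) ≤ Real.log (1 + ‖x‖) + Real.log (1 + ‖y‖) := by
  rw [← Real.log_mul (by positivity) (by positivity)]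
  apply Real.log_le_log (by positivity)
  have h := norm_sub_le x y
  nlinarith [norm_nonneg x, norm_nonneg y]

lemma cs_weighted {α : Type*} [MeasurableSpace α] (μ : Measure α) {L : α → ℝ≥0∞}
    {u v : α → ℝ} (hL : Measurable L) (hu : Measurable u) (hv : Measurable v) :
    ∫⁻ a, L a * ENNReal.ofReal |u a * v a| ∂μ ≤
      (∫⁻ a, L a * ENNReal.ofReal ((u a) ^ 2) ∂μ) ^ (1/2:ℝ) *
      (∫⁻ a, L a * ENNReal.ofReal ((v a) ^ 2) ∂μ) ^ (1/2:ℝ) := by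
  have key : ∀ a, L a * ENNReal.ofReal |u a * v a| =
      (L a ^ (1/2:ℝ) * ENNReal.ofReal |u a|) * (L a ^ (1/2:ℝ) * ENNReal.ofReal |v a|) := by
    intro a
    rw [abs_mul, ENNReal.ofReal_mul (abs_nonneg _)]
    have hh : L a ^ (1/2:ℝ) * L a ^ (1/2:ℝ) = L a := by
      rw [← ENNReal.rpow_add_of_nonneg _ _ (by norm_num) (by norm_num)]
      norm_num
    rw [mul_mul_mul_comm, hh]
  have sq : ∀ (f : α → ℝ) (a : α),
      (L a ^ (1/2:ℝ) * ENNReal.ofReal |f a|) ^ (2:ℝ) = L a * ENNReal.ofReal ((f a) ^ 2) := by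
    intro f a
    rw [ENNReal.mul_rpow_of_nonneg _ _ (by norm_num), ← ENNReal.rpow_mul,
      ENNReal.ofReal_rpow_of_nonneg (abs_nonneg _) (by norm_num)]
    norm_num
  calc ∫⁻ a, L a * ENNReal.ofReal |u a * v a| ∂μ
      = ∫⁻ a, (L a ^ (1/2:ℝ) * ENNReal.ofReal |u a|) * (L a ^ (1/2:ℝ) * ENNReal.ofReal |v a|) ∂μ := by
        simp_rw [key]
    _ ≤ (∫⁻ a, (L a ^ (1/2:ℝ) * ENNReal.ofReal |u a|) ^ (2:ℝ) ∂μ) ^ (1/2:ℝ) *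
        (∫⁻ a, (L a ^ (1/2:ℝ) * ENNReal.ofReal |v a|) ^ (2:ℝ) ∂μ) ^ (1/2:ℝ) := by
        apply cs_aux μ
        · exact ((hL.pow_const _).mul (hu.abs.ennreal_ofReal)).aemeasurable
        · exact ((hL.pow_const _).mul (hv.abs.ennreal_ofReal)).aemeasurable
    _ = _ := by simp_rw [sq u, sq v]

theorem stmt_1 (u v w z : EuclideanSpace ℝ (Fin 2) → ℝ)
    (hu : Measurable u) (hv : Measurable v) (hw : Measurable w) (hz : Measurable z) :
    ∫⁻ x, ∫⁻ y, ENNReal.ofReal (Real.log (1 + ‖x - y‖)) *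
        ENNReal.ofReal |u x * v x| * ENNReal.ofReal |w y * z y| ≤
      (∫⁻ x, ENNReal.ofReal (Real.log (1 + ‖x‖) * (u x) ^ 2)) ^ (1 / 2 : ℝ) *
        (∫⁻ x, ENNReal.ofReal (Real.log (1 + ‖x‖) * (v x) ^ 2)) ^ (1 / 2 : ℝ) *
        (∫⁻ x, ENNReal.ofReal ((w x) ^ 2)) ^ (1 / 2 : ℝ) *
        (∫⁻ x, ENNReal.ofReal ((z x) ^ 2)) ^ (1 / 2 : ℝ) +
      (∫⁻ x, ENNReal.ofReal ((u x) ^ 2)) ^ (1 / 2 : ℝ) *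
        (∫⁻ x, ENNReal.ofReal ((v x) ^ 2)) ^ (1 / 2 : ℝ) *
        (∫⁻ x, ENNReal.ofReal (Real.log (1 + ‖x‖) * (w x) ^ 2)) ^ (1 / 2 : ℝ) *
        (∫⁻ x, ENNReal.ofReal (Real.log (1 + ‖x‖) * (z x) ^ 2)) ^ (1 / 2 : ℝ) := by
  set μ : Measure (EuclideanSpace ℝ (Fin 2)) := volume
  set L : EuclideanSpace ℝ (Fin 2) → ℝ≥0∞ := fun x => ENNReal.ofReal (Real.log (1 + ‖x‖)) with hLdef
  have hL : Measurable L := by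
    exact (Real.measurable_log.comp (measurable_const.add measurable_norm)).ennreal_ofReal
  set A : EuclideanSpace ℝ (Fin 2) → ℝ≥0∞ := fun x => ENNReal.ofReal |u x * v x| with hAdef
  set B : EuclideanSpace ℝ (Fin 2) → ℝ≥0∞ := fun y => ENNReal.ofReal |w y * z y| with hBdef
  have hA : Measurable A := ((hu.mul hv).abs).ennreal_ofReal
  have hB : Measurable B := ((hw.mul hz).abs).ennreal_ofReal
  have hpt : ∀ x y : EuclideanSpace ℝ (Fin 2),
      ENNReal.ofReal (Real.log (1 + ‖x - y‖)) * A x * B y ≤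
        (L x * A x) * B y + A x * (L y * B y) := by
    intro x y
    have h1 : ENNReal.ofReal (Real.log (1 + ‖x - y‖)) ≤ L x + L y := by
      calc ENNReal.ofReal (Real.log (1 + ‖x - y‖))
          ≤ ENNReal.ofReal (Real.log (1 + ‖x‖) + Real.log (1 + ‖y‖)) :=
            ENNReal.ofReal_le_ofReal (log_sub_le x y)
        _ ≤ L x + L y := ENNReal.ofReal_add_le
    calc ENNReal.ofReal (Real.log (1 + ‖x - y‖)) * A x * B y
        ≤ (L x + L y) * A x * B y := by gcongr
      _ = (L x * A x) * B y + A x * (L y * B y) := by ring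
  -- rewrite weighted integrals: L x * ofReal(f x ^2) = ofReal(log * f^2)
  have hw2 : ∀ (f : EuclideanSpace ℝ (Fin 2) → ℝ) (x),
      L x * ENNReal.ofReal ((f x) ^ 2) = ENNReal.ofReal (Real.log (1 + ‖x‖) * (f x) ^ 2) := by
    intro f x
    rw [ENNReal.ofReal_mul']
    positivity
  calc ∫⁻ x, ∫⁻ y, ENNReal.ofReal (Real.log (1 + ‖x - y‖)) * A x * B y ∂μ ∂μ
      ≤ ∫⁻ x, ∫⁻ y, ((L x * A x) * B y + A x * (L y * B y)) ∂μ ∂μ := by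
        exact lintegral_mono fun x => lintegral_mono fun y => hpt x y
    _ = ∫⁻ x, ((L x * A x) * ∫⁻ y, B y ∂μ + A x * ∫⁻ y, L y * B y ∂μ) ∂μ := by
        refine lintegral_congr fun x => ?_
        rw [lintegral_add_left (hB.const_mul _), lintegral_const_mul _ hB,
          lintegral_const_mul (f := fun y => L y * B y) _ (hL.mul hB)]
    _ = (∫⁻ x, L x * A x ∂μ) * (∫⁻ y, B y ∂μ) + (∫⁻ x, A x ∂μ) * (∫⁻ y, L y * B y ∂μ) := by
        rw [lintegral_add_left (Measurable.mul_const (f := fun x => L x * A x) (hL.mul hA) _),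
          lintegral_mul_const (f := fun x => L x * A x) _ (hL.mul hA),
          lintegral_mul_const _ hA]
    _ ≤ ((∫⁻ x, L x * ENNReal.ofReal ((u x)^2) ∂μ) ^ (1/2:ℝ) *
          (∫⁻ x, L x * ENNReal.ofReal ((v x)^2) ∂μ) ^ (1/2:ℝ)) *
        ((∫⁻ y, ENNReal.ofReal ((w y)^2) ∂μ) ^ (1/2:ℝ) *
          (∫⁻ y, ENNReal.ofReal ((z y)^2) ∂μ) ^ (1/2:ℝ)) +
        ((∫⁻ x, ENNReal.ofReal ((u x)^2) ∂μ) ^ (1/2:ℝ) *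
          (∫⁻ x, ENNReal.ofReal ((v x)^2) ∂μ) ^ (1/2:ℝ)) *
        ((∫⁻ y, L y * ENNReal.ofReal ((w y)^2) ∂μ) ^ (1/2:ℝ) *
          (∫⁻ y, L y * ENNReal.ofReal ((z y)^2) ∂μ) ^ (1/2:ℝ)) := by
        gcongr
        · exact cs_weighted μ hL hu hv
        · have := cs_weighted μ (L := fun _ => 1) measurable_const hw hz
          simpa [hBdef] using this
        · have := cs_weighted μ (L := fun _ => 1) measurable_const hu hv
          simpa [hAdef] using this
        · exact cs_weighted μ hL hw hz
    _ = _ := by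
        simp_rw [hw2 u, hw2 v, hw2 w, hw2 z]
        ring
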